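/- For every integer m > 1 with m ≠ 6, there exists a prime p such that p divides 2^m − 1 but p does not divide 2^j − 1 for any positive integer j < m. -/
import Mathlib

open Polynomial

namespace BangAux

/-- The integer value `Φ_m(2)`. -/
noncomputable def Phi (m : ℕ) : ℤ := (cyclotomic m ℤ).eval 2

lemma Phi_pos (m : ℕ) : 0 < Phi m := cyclotomic_pos' m (by norm_num)

lemma Phi_dvd (m : ℕ) (hm : 0 < m) : Phi m ∣ 2 ^ m - 1 := by
  have h := prod_cyclotomic_eq_X_pow_sub_one hm ℤ
  have h2 : (∏ i ∈ m.divisors, cyclotomic i ℤ).eval 2 = (2:ℤ) ^ m - 1 := by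
    rw [h]; simp
  rw [eval_prod] at h2
  rw [← h2]
  exact Finset.dvd_prod_of_mem _ (Nat.mem_divisors_self m hm.ne')

lemma Phi_gt_one (m : ℕ) (hm : 1 < m) : 1 < Phi m := by
  have h := sub_one_lt_natAbs_cyclotomic_eval (q := 2) hm (by norm_num)
  have hp := Phi_pos m
  unfold Phi at hp ⊢
  have : ((2:ℕ):ℤ) = 2 := by norm_num
  rw [this] at h
  omega

lemma isRoot_of_dvd {m p : ℕ} (h : (p:ℤ) ∣ Phi m) :
    IsRoot (cyclotomic m (ZMod p)) 2 := by
  have : eval 2 (cyclotomic m (ZMod p)) = (((cyclotomic m ℤ).eval 2 : ℤ) : ZMod p) := by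
    rw [← map_cyclotomic_int m (ZMod p)]
    have := eval_intCast_map (Int.castRingHom (ZMod p)) (cyclotomic m ℤ) 2
    simpa using this
  rw [IsRoot, this]
  obtain ⟨c, hc⟩ := h
  rw [show (cyclotomic m ℤ).eval 2 = Phi m from rfl, hc]
  push_cast
  simp [ZMod.natCast_self]

lemma primitive_case {m p : ℕ} (hp : p.Prime) (hdvd : (p:ℤ) ∣ Phi m) (hpm : ¬ p ∣ m) :
    p ∣ 2 ^ m - 1 ∧ ∀ j : ℕ, 0 < j → j < m → ¬ p ∣ 2 ^ j - 1 := by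
  haveI : Fact p.Prime := ⟨hp⟩
  haveI : NeZero ((m : ℕ) : ZMod p) :=
    ⟨by rw [Ne, ZMod.natCast_eq_zero_iff]; exact hpm⟩
  have hprim : IsPrimitiveRoot (2 : ZMod p) m :=
    (isRoot_cyclotomic_iff).mp (isRoot_of_dvd hdvd)
  have h2m : (1:ℕ) ≤ 2 ^ m := Nat.one_le_two_pow
  constructor
  · rw [← ZMod.natCast_eq_zero_iff]
    push_cast [h2m]
    rw [sub_eq_zero]
    exact_mod_cast hprim.pow_eq_one
  · intro j hj hjm hdvdj
    rw [← ZMod.natCast_eq_zero_iff] at hdvdj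
    push_cast [Nat.one_le_two_pow (n := j)] at hdvdj
    rw [sub_eq_zero] at hdvdj
    have : (2 : ZMod p) ^ j = 1 := by exact_mod_cast hdvdj
    have := (hprim.pow_eq_one_iff_dvd j).mp this
    have := Nat.le_of_dvd hj this
    omega

lemma odd_of_dvd_phi {m p : ℕ} (hm : 0 < m) (hp : p.Prime) (hdvd : (p:ℤ) ∣ Phi m) : p ≠ 2 := by
  rintro rfl
  have h1 : (2:ℤ) ∣ 2 ^ m - 1 := dvd_trans (by exact_mod_cast hdvd) (Phi_dvd m hm)
  have h2 : (2:ℤ) ∣ 2 ^ m := dvd_pow_self 2 hm.ne'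
  omega

lemma order_eq {m p : ℕ} (hp : p.Prime) (hm : 0 < m) (hdvd : (p:ℤ) ∣ Phi m)
    (hpm : p ∣ m) : orderOf (2 : ZMod p) = ordCompl[p] m := by
  haveI : Fact p.Prime := ⟨hp⟩
  set k := m.factorization p with hk
  set s := ordCompl[p] m with hs
  have hks : p ^ k * s = m := Nat.ordProj_mul_ordCompl_eq_self m p
  have hkpos : 0 < k := hp.factorization_pos_of_dvd hm.ne' hpm
  have hps : ¬ p ∣ s := Nat.not_dvd_ordCompl hp hm.ne'
  have hroot : IsRoot (cyclotomic m (ZMod p)) 2 := isRoot_of_dvd hdvd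
  rw [← hks, cyclotomic_mul_prime_pow_eq (ZMod p) hps hkpos] at hroot
  have hroot2 : IsRoot (cyclotomic s (ZMod p)) 2 := by
    have := hroot
    rw [IsRoot, eval_pow, pow_eq_zero_iff] at this
    · exact this
    · have h1 : p ^ (k-1) < p ^ k := Nat.pow_lt_pow_right hp.one_lt (by omega)
      omega
  haveI : NeZero ((s : ℕ) : ZMod p) :=
    ⟨by rw [Ne, ZMod.natCast_eq_zero_iff]; exact hps⟩
  exact ((isRoot_cyclotomic_iff).mp hroot2).eq_orderOf.symm

lemma order_lt {p : ℕ} (hp : p.Prime) (hp2 : p ≠ 2) :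
    2 ≤ orderOf (2 : ZMod p) ∧ orderOf (2 : ZMod p) ∣ p - 1 := by
  haveI : Fact p.Prime := ⟨hp⟩
  have hp3 : 3 ≤ p := by
    rcases hp.two_le.lt_or_eq with h | h
    · omega
    · omega
  have h20 : (2 : ZMod p) ≠ 0 := by
    rw [show ((2:ZMod p)) = ((2:ℕ) : ZMod p) by push_cast; ring, Ne,
      ZMod.natCast_eq_zero_iff]
    intro h
    have := Nat.le_of_dvd (by norm_num) h
    omega
  constructor
  · by_contra h
    push_neg at h
    interval_cases ho : orderOf (2 : ZMod p)
    · have := orderOf_eq_zero_iff.mp ho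
      exact this (isOfFinOrder_iff_pow_eq_one.2
        ⟨p - 1, by omega, ZMod.pow_card_sub_one_eq_one h20⟩)
    · have := orderOf_eq_one_iff.mp ho
      have h21 : ((2:ℕ) : ZMod p) = ((1:ℕ) : ZMod p) := by push_cast; exact_mod_cast this
      rw [ZMod.natCast_eq_natCast_iff] at h21
      have h22 : 2 % p = 1 % p := h21
      rw [Nat.mod_eq_of_lt (by omega), Nat.mod_eq_of_lt (by omega)] at h22
      omega
  · exact orderOf_dvd_of_pow_eq_one (ZMod.pow_card_sub_one_eq_one h20)

lemma helper_lt {m p q : ℕ} (hm : 0 < m) (hp : p.Prime) (hq : q.Prime) (hne : p ≠ q)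
    (hqphi : (q:ℤ) ∣ Phi m) (hpm : p ∣ m) (hqm : q ∣ m) : p < q := by
  have hq2 := odd_of_dvd_phi hm hq hqphi
  have hord := order_eq hq hm hqphi hqm
  obtain ⟨h2s, hdvd⟩ := order_lt hq hq2
  have hsle : orderOf (2 : ZMod q) ≤ q - 1 :=
    Nat.le_of_dvd (by have := hq.two_le; omega) hdvd
  have hps : p ∣ ordCompl[q] m := by
    refine Nat.Coprime.dvd_of_dvd_mul_left
      (Nat.Coprime.pow_right (m.factorization q) ((Nat.coprime_primes hp hq).mpr hne)) ?_
    rw [Nat.ordProj_mul_ordCompl_eq_self]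
    exact hpm
  have h1 := Nat.le_of_dvd (Nat.ordCompl_pos q hm.ne') hps
  rw [← hord] at h1
  have := hq.two_le
  omega

lemma sq_not_dvd {m p : ℕ} (hm : 1 < m) (hp : p.Prime) (hdvd : (p:ℤ) ∣ Phi m)
    (hpm : p ∣ m) : ¬ ((p:ℤ)^2 ∣ Phi m) := by
  haveI : Fact p.Prime := ⟨hp⟩
  have hm0 : 0 < m := by omega
  have hp2 : p ≠ 2 := odd_of_dvd_phi hm0 hp hdvd
  have hp3 : 3 ≤ p := by have := hp.two_le; omega
  have hord := order_eq hp hm0 hdvd hpm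
  set s := ordCompl[p] m with hs
  set k := m.factorization p with hk
  have hks : p ^ k * s = m := Nat.ordProj_mul_ordCompl_eq_self m p
  have hkpos : 0 < k := hp.factorization_pos_of_dvd hm0.ne' hpm
  -- m / p and its properties
  have hmp : m / p * p = m := Nat.div_mul_cancel hpm
  have hmp0 : 0 < m / p := Nat.div_pos (Nat.le_of_dvd hm0 hpm) hp.pos
  have epk : p ^ k = p * p ^ (k-1) := by
    conv_lhs => rw [show k = 1 + (k-1) by omega]
    rw [pow_add, pow_one]
  have e1 : m = p * (p ^ (k-1) * s) := by rw [← hks, epk]; ring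
  have e2 : m / p = p ^ (k-1) * s := by rw [e1, Nat.mul_div_cancel_left _ hp.pos]
  have hsmp : s ∣ m / p := by rw [e2]; exact dvd_mul_left s _
  -- p divides y - 1 where y = 2 ^ (m / p)
  set y : ℤ := 2 ^ (m / p) with hy
  have hpy : (p:ℤ) ∣ y - 1 := by
    have h1 : (2 : ZMod p) ^ (m / p) = 1 := by
      rw [← hord] at hsmp
      exact orderOf_dvd_iff_pow_eq_one.mp hsmp
    have : (((2:ℤ) ^ (m/p) - 1 : ℤ) : ZMod p) = 0 := by
      push_cast
      rw [h1]; ring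
    rwa [ZMod.intCast_zmod_eq_zero_iff_dvd] at this
  -- C = geometric sum
  set C : ℤ := ∑ i ∈ Finset.range p, y ^ i with hC
  have hgeo : (y - 1) * C = 2 ^ m - 1 := by
    rw [mul_geom_sum, hy, ← pow_mul, Nat.div_mul_cancel hpm]
  -- Phi m divides C
  have hPhiC : Phi m ∣ C := by
    have hsub : insert m (Nat.divisors (m / p)) ⊆ Nat.divisors m := by
      intro d hd
      rcases Finset.mem_insert.mp hd with hdm | hd
      · rw [hdm]; exact Nat.mem_divisors_self m hm0.ne'
      · exact Nat.divisors_subset_of_dvd hm0.ne' (Nat.div_dvd_of_dvd hpm) hd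
    have hnotmem : m ∉ Nat.divisors (m / p) := by
      intro hmem
      have := Nat.le_of_dvd hmp0 (Nat.mem_divisors.mp hmem).1
      have : m / p < m := Nat.div_lt_self hm0 hp.one_lt
      omega
    have hprod : ∏ d ∈ insert m (Nat.divisors (m / p)), (cyclotomic d ℤ).eval 2
        ∣ (2:ℤ) ^ m - 1 := by
      have h2 : (∏ i ∈ m.divisors, cyclotomic i ℤ).eval 2 = (2:ℤ) ^ m - 1 := by
        rw [prod_cyclotomic_eq_X_pow_sub_one hm0 ℤ]; simp
      rw [← h2, eval_prod]
      exact Finset.prod_dvd_prod_of_subset _ _ _ hsub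
    rw [Finset.prod_insert hnotmem] at hprod
    have hprodmp : ∏ d ∈ Nat.divisors (m / p), (cyclotomic d ℤ).eval 2 = y - 1 := by
      have h2 : (∏ i ∈ (m/p).divisors, cyclotomic i ℤ).eval 2 = (2:ℤ) ^ (m/p) - 1 := by
        rw [prod_cyclotomic_eq_X_pow_sub_one hmp0 ℤ]; simp
      rw [← h2, eval_prod]
    rw [hprodmp] at hprod
    -- Phi m * (y - 1) ∣ (y-1) * C
    rw [← hgeo] at hprod
    have hy1 : y - 1 ≠ 0 := by
      have : (2:ℤ) ≤ y := by
        rw [hy]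
        calc (2:ℤ) = 2 ^ 1 := (pow_one 2).symm
        _ ≤ 2 ^ (m/p) := pow_le_pow_right₀ (by norm_num) hmp0
      omega
    obtain ⟨c, hc⟩ := hprod
    refine ⟨c, ?_⟩
    have : (y - 1) * C = (y - 1) * (Phi m * c) := by rw [hc]; unfold Phi; ring
    exact mul_left_cancel₀ hy1 this
  -- p ^ 2 does not divide C
  intro hsq
  have hsqC : (p:ℤ)^2 ∣ C := hsq.trans hPhiC
  -- C - p = (y - 1) * D with p ∣ D
  have hCp : (p:ℤ)^2 ∣ C - p := by
    have hdecomp : C - p = ∑ i ∈ Finset.range p, (y ^ i - 1) := by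
      rw [Finset.sum_sub_distrib]
      simp [hC]
    have hterm : ∀ i, y ^ i - 1 = (y - 1) * ∑ j ∈ Finset.range i, y ^ j := by
      intro i
      rw [mul_geom_sum]
    have hDdef : C - p = (y - 1) * ∑ i ∈ Finset.range p, ∑ j ∈ Finset.range i, y ^ j := by
      rw [hdecomp, Finset.mul_sum]
      exact Finset.sum_congr rfl fun i _ => hterm i
    set D : ℤ := ∑ i ∈ Finset.range p, ∑ j ∈ Finset.range i, y ^ j with hD
    have hpD : (p:ℤ) ∣ D := by
      -- D ≡ ∑ i < p, i  [mod p], and p ∣ ∑ i < p, i since p odd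
      have h1 : (p:ℤ) ∣ D - ∑ i ∈ Finset.range p, (i : ℤ) := by
        rw [hD, ← Finset.sum_sub_distrib]
        refine Finset.dvd_sum fun i _ => ?_
        have : (∑ j ∈ Finset.range i, y ^ j) - i = ∑ j ∈ Finset.range i, (y ^ j - 1) := by
          rw [Finset.sum_sub_distrib]; simp
        rw [this]
        exact Finset.dvd_sum fun j _ => hpy.trans ⟨∑ l ∈ Finset.range j, y ^ l, hterm j⟩
      have h2 : (p:ℤ) ∣ ∑ i ∈ Finset.range p, (i : ℤ) := by
        obtain ⟨u, hu⟩ : ∃ u, p - 1 = 2 * u := ⟨(p-1)/2, by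
          have : (p - 1) % 2 = 0 := by
            have := hp.eq_one_or_self_of_dvd 2
            omega
          omega⟩
        have hg := Finset.sum_range_id_mul_two p
        have hnat : (∑ i ∈ Finset.range p, i) = p * u := by
          have h3 : (∑ i ∈ Finset.range p, i) * 2 = (p * u) * 2 := by
            rw [hg, hu]; ring
          omega
        have : (p:ℕ) ∣ ∑ i ∈ Finset.range p, i := ⟨u, hnat⟩
        have hcast := Int.natCast_dvd_natCast.mpr this
        have : ((∑ i ∈ Finset.range p, i : ℕ) : ℤ) = ∑ i ∈ Finset.range p, (i:ℤ) := by
          push_cast; ring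
        rwa [this] at hcast
      have := dvd_add h1 h2
      simpa using this
    rw [hDdef, show ((p:ℤ))^2 = p * p from sq (p:ℤ)]
    exact mul_dvd_mul hpy hpD
  have hpp : (p:ℤ)^2 ∣ (p:ℤ) := by
    have := dvd_sub hsqC hCp
    simpa using this
  have hle := Int.le_of_dvd (by positivity) hpp
  have : (3:ℤ) ≤ p := by exact_mod_cast hp3
  nlinarith

lemma arith1 : ∀ n, 4 ≤ n → 3 * n < 2 ^ n := by
  intro n hn
  induction n with
  | zero => omega
  | succ k ih =>
    rcases Nat.lt_or_ge k 4 with h | h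
    · interval_cases k <;> first | (exfalso; omega) | norm_num
    · have h1 := ih (by omega)
      have h2 : (3:ℕ) < 2 ^ k := by
        calc (3:ℕ) < 3 * k := by omega
        _ < 2 ^ k := h1
      rw [pow_succ]
      omega

lemma arith2 : ∀ n, 3 ≤ n → 2 * n ≤ 3 ^ (n - 1) := by
  intro n hn
  induction n with
  | zero => omega
  | succ k ih =>
    rcases Nat.lt_or_ge k 3 with h | h
    · interval_cases k <;> first | (exfalso; omega) | norm_num
    · have h1 := ih (by omega)
      have h0 : 1 ≤ 3 ^ (k - 1) := Nat.one_le_pow _ _ (by norm_num)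
      have h2 : k + 1 - 1 = (k - 1) + 1 := by omega
      rw [h2, pow_succ]
      omega

lemma key_ineq {p q : ℕ} (hp : 3 ≤ p) (hq : 2 ≤ q) (hx : q = 2 → 4 ≤ p) :
    p * (q + 1) < q ^ p := by
  rcases Nat.lt_or_ge q 3 with h | h
  · have hq2 : q = 2 := by omega
    subst hq2
    have := arith1 p (hx rfl)
    omega
  · have h1 : 3 ^ (p-1) ≤ q ^ (p-1) := Nat.pow_le_pow_left h _
    have h2 : q ^ (p-1) * q = q ^ p := by
      rw [← pow_succ]
      congr 1
      omega
    have h3 := arith2 p hp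
    have hpq : p < p * q := by nlinarith
    calc p * (q + 1) = p * q + p := by ring
    _ < p * q + p * q := by omega
    _ = (2 * p) * q := by ring
    _ ≤ 3 ^ (p-1) * q := Nat.mul_le_mul_right q h3
    _ ≤ q ^ (p-1) * q := Nat.mul_le_mul_right q h1
    _ = q ^ p := h2

lemma eval_cyclotomic_mul_pow {n p : ℕ} (hp : p.Prime) (hpn : p ∣ n) :
    ∀ (j : ℕ) (x : ℤ), (cyclotomic (n * p ^ j) ℤ).eval x
      = (cyclotomic n ℤ).eval (x ^ p ^ j) := by
  intro j
  induction j with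
  | zero => simp
  | succ i ih =>
    intro x
    have hdvd2 : p ∣ n * p ^ i := hpn.mul_right _
    have h1 : n * p ^ (i+1) = (n * p ^ i) * p := by ring
    rw [h1, ← cyclotomic_expand_eq_cyclotomic hp hdvd2 ℤ, expand_eval, ih]
    congr 1
    rw [← pow_mul]
    congr 1
    rw [pow_succ]
    ring

lemma phi_ne_p {m p : ℕ} (hm : 1 < m) (hm6 : m ≠ 6) (hp : p.Prime)
    (hdvd : (p:ℤ) ∣ Phi m) (hpm : p ∣ m) : Phi m ≠ (p:ℤ) := by
  haveI : Fact p.Prime := ⟨hp⟩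
  have hm0 : 0 < m := by omega
  have hp2 : p ≠ 2 := odd_of_dvd_phi hm0 hp hdvd
  have hp3 : 3 ≤ p := by have := hp.two_le; omega
  have hord := order_eq hp hm0 hdvd hpm
  obtain ⟨h2s, hsp1⟩ := order_lt hp hp2
  rw [hord] at h2s hsp1
  set s := ordCompl[p] m with hs
  set k := m.factorization p with hk
  have hks : p ^ k * s = m := Nat.ordProj_mul_ordCompl_eq_self m p
  have hkpos : 0 < k := hp.factorization_pos_of_dvd hm0.ne' hpm
  have hps : ¬ p ∣ s := Nat.not_dvd_ordCompl hp hm0.ne'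
  set Qn : ℕ := 2 ^ p ^ (k - 1) with hQn
  have hQ2 : 2 ≤ Qn := by
    rw [hQn]
    calc (2:ℕ) = 2 ^ 1 := (pow_one 2).symm
    _ ≤ 2 ^ p ^ (k-1) := Nat.pow_le_pow_right (by norm_num) (Nat.one_le_pow _ _ hp.pos)
  have hx : Qn = 2 → 4 ≤ p := by
    intro hq2
    by_contra h4
    have hp3' : p = 3 := by omega
    have hk1 : k = 1 := by
      have h2 : (2:ℕ) ^ p ^ (k-1) = 2 ^ 1 := by rw [← hQn, hq2, pow_one]
      have h3 := Nat.pow_right_injective (le_refl 2) h2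
      have hk0 : k - 1 = 0 := by
        by_contra hne
        have h5 : p ≤ p ^ (k-1) := Nat.le_self_pow hne p
        omega
      omega
    have hs2 : s = 2 := by
      have : s ∣ 2 := by rw [hp3'] at hsp1; exact hsp1
      have := Nat.le_of_dvd (by norm_num) this
      omega
    rw [hk1, hs2, hp3'] at hks
    simp at hks
    omega
  have hineq := key_ineq hp3 hQ2 hx
  -- structural identities
  have hmeq : m = (s * p) * p ^ (k - 1) := by
    rw [← hks]
    have : p ^ k = p * p ^ (k-1) := by
      conv_lhs => rw [show k = 1 + (k-1) by omega]
      rw [pow_add, pow_one]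
    rw [this]; ring
  set Q : ℤ := (Qn : ℤ) with hQ
  have hQval : Q = (2:ℤ) ^ p ^ (k-1) := by rw [hQ, hQn]; push_cast; ring
  have hstruct : Phi m = (cyclotomic (s * p) ℤ).eval Q := by
    rw [show Phi m = (cyclotomic m ℤ).eval 2 from rfl, hmeq,
      eval_cyclotomic_mul_pow hp (dvd_mul_left p s), hQval]
  have hmul : (cyclotomic (s * p) ℤ).eval Q * (cyclotomic s ℤ).eval Q
      = (cyclotomic s ℤ).eval (Q ^ p) := by
    have := cyclotomic_expand_eq_cyclotomic_mul hp hps ℤ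
    have h2 := congrArg (eval Q) this
    rw [expand_eval, eval_mul] at h2
    exact h2.symm
  -- now pass to ℝ
  intro hcontra
  have cast_eval : ∀ (n : ℕ) (x : ℤ), (((cyclotomic n ℤ).eval x : ℤ) : ℝ)
      = (cyclotomic n ℝ).eval (x : ℝ) := by
    intro n x
    have := cyclotomic.eval_apply x n (algebraMap ℤ ℝ)
    simpa using this.symm
  set QR : ℝ := (Qn : ℝ) with hQR
  have hQR2 : (2:ℝ) ≤ QR := by rw [hQR]; exact_mod_cast hQ2
  have hQR1 : (1:ℝ) < QR := by linarith
  have hQRp1 : (1:ℝ) < QR ^ p := by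
    calc (1:ℝ) < QR := hQR1
    _ = QR ^ 1 := (pow_one QR).symm
    _ ≤ QR ^ p := pow_le_pow_right₀ (by linarith) (by omega)
  set a : ℝ := (cyclotomic s ℝ).eval QR with ha
  set b : ℝ := (cyclotomic s ℝ).eval (QR ^ p) with hb
  have hPp : (cyclotomic (s*p) ℤ).eval Q = (p:ℤ) := hstruct.symm.trans hcontra
  have hZ : (p:ℤ) * (cyclotomic s ℤ).eval Q = (cyclotomic s ℤ).eval (Q ^ p) := by
    rw [← hmul, hPp]
  have hab : (p:ℝ) * a = b := by
    have h1 := congrArg (fun z : ℤ => (z : ℝ)) hZ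
    simp only [Int.cast_mul] at h1
    rw [cast_eval, cast_eval] at h1
    have hQcast : ((Q:ℤ) : ℝ) = QR := by rw [hQ, hQR]; push_cast; ring
    have hQpcast : (((Q^p : ℤ) : ℤ) : ℝ) = QR ^ p := by push_cast [hQcast]; ring
    rw [hQpcast, hQcast] at h1
    rw [ha, hb]
    push_cast at h1 ⊢
    exact h1
  have htot : Nat.totient s ≠ 0 := (Nat.totient_pos.mpr (by omega)).ne'
  have hlow : (QR ^ p - 1) ^ Nat.totient s < b :=
    sub_one_pow_totient_lt_cyclotomic_eval h2s hQRp1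
  have hup : a ≤ (QR + 1) ^ Nat.totient s := cyclotomic_eval_le_add_one_pow_totient hQR1 s
  have hkeyR : (p:ℝ) * (QR + 1) ≤ QR ^ p - 1 := by
    have h0 : (p * (Qn + 1) + 1 : ℕ) ≤ Qn ^ p := hineq
    have h1 := (Nat.cast_le (α := ℝ)).mpr h0
    push_cast at h1
    rw [hQR]
    push_cast
    linarith
  have hp0R : (0:ℝ) ≤ (p:ℝ) := by positivity
  have hmulnn : (0:ℝ) ≤ (p:ℝ) * (QR+1) := by positivity
  have h1 : b ≤ (p:ℝ) * (QR+1) ^ Nat.totient s := by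
    rw [← hab]; exact mul_le_mul_of_nonneg_left hup hp0R
  have h2 : (p:ℝ) ≤ (p:ℝ) ^ Nat.totient s := by
    refine le_self_pow₀ ?_ htot
    have : (1:ℕ) ≤ p := hp.pos
    exact_mod_cast this
  have h3 : ((p:ℝ) * (QR+1)) ^ Nat.totient s ≤ (QR^p - 1) ^ Nat.totient s :=
    pow_le_pow_left₀ hmulnn hkeyR _
  have h4 : (p:ℝ) * (QR+1) ^ Nat.totient s ≤ (p:ℝ) ^ Nat.totient s * (QR+1) ^ Nat.totient s := by
    refine mul_le_mul_of_nonneg_right h2 ?_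
    positivity
  rw [← mul_pow] at h4
  linarith

end BangAux

theorem bang_theorem (m : ℕ) (hm : 1 < m) (hm6 : m ≠ 6) :
    ∃ p : ℕ, p.Prime ∧ p ∣ 2 ^ m - 1 ∧
      ∀ j : ℕ, 0 < j → j < m → ¬ p ∣ 2 ^ j - 1 := by
  have hm0 : 0 < m := by omega
  have hmain : ∃ p : ℕ, p.Prime ∧ (p:ℤ) ∣ BangAux.Phi m ∧ ¬ p ∣ m := by
    by_contra hcon
    push_neg at hcon
    set N : ℕ := (BangAux.Phi m).toNat with hN
    have hNZ : (N : ℤ) = BangAux.Phi m := Int.toNat_of_nonneg (BangAux.Phi_pos m).le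
    have hN1 : 1 < N := by
      have := BangAux.Phi_gt_one m hm
      omega
    set p := N.minFac with hp'
    have hp : p.Prime := Nat.minFac_prime (by omega)
    have hpdvdN : p ∣ N := Nat.minFac_dvd N
    have hdvd : (p:ℤ) ∣ BangAux.Phi m := by
      rw [← hNZ]; exact_mod_cast hpdvdN
    have hpm : p ∣ m := hcon p hp hdvd
    have huniq : ∀ {d : ℕ}, d.Prime → d ∣ N → d = p := by
      intro d hd hdN
      by_contra hne
      have hdZ : (d:ℤ) ∣ BangAux.Phi m := by
        rw [← hNZ]; exact_mod_cast hdN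
      have hdm : d ∣ m := hcon d hd hdZ
      have h1 := BangAux.helper_lt hm0 hd hp hne hdvd hdm hpm
      have h2 := BangAux.helper_lt hm0 hp hd (Ne.symm hne) hdZ hpm hdm
      omega
    have hNpow := Nat.eq_prime_pow_of_unique_prime_dvd (by omega : N ≠ 0) huniq
    set L := N.primeFactorsList.length with hL
    have hL1 : 1 ≤ L := by
      by_contra h
      push_neg at h
      have : L = 0 := by omega
      rw [this, pow_zero] at hNpow
      omega
    have hL2 : L < 2 := by
      by_contra h
      push_neg at h
      have hsq : (p:ℤ)^2 ∣ BangAux.Phi m := by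
        rw [← hNZ, hNpow]
        have : p^2 ∣ p^L := pow_dvd_pow p h
        exact_mod_cast this
      exact BangAux.sq_not_dvd hm hp hdvd hpm hsq
    have hNp : N = p := by
      rw [hNpow, show L = 1 by omega, pow_one]
    have hfin : BangAux.Phi m = (p:ℤ) := by rw [← hNZ, hNp]
    exact BangAux.phi_ne_p hm hm6 hp hdvd hpm hfin
  obtain ⟨p, hp, hdvd, hpm⟩ := hmain
  obtain ⟨h1, h2⟩ := BangAux.primitive_case hp hdvd hpm
  exact ⟨p, hp, h1, h2⟩
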